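/- Let r be an odd prime, let n ≥ r + 2, and let x be an element of the alternating group A_n = alternatingGroup (Fin n) whose underlying permutation is a cycle of length r (i.e. an r-cycle fixing the remaining n − r points). Then 2 · |C_{A_n}(x)| = r · (n − r)!, i.e. the centralizer of x in A_n has cardinality r·(n−r)!/2. -/

import Mathlib

open Equiv Equiv.Perm

lemma aux_card_centralizer_cycle {n r : ℕ} (hrpos : 0 < r) {c : Equiv.Perm (Fin n)}
    (hc : c.IsCycle) (hsupp : c.support.card = r) :
    Nat.card (Subgroup.centralizer ({c} : Set (Equiv.Perm (Fin n)))) =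
      r * (n - r).factorial := by
  classical
  haveI : NeZero r := ⟨hrpos.ne'⟩
  have horder : orderOf c = r := by rw [hc.orderOf, hsupp]
  have hmem : ∀ (k : ℕ) (h : Equiv.Perm {y // y ∈ c.supportᶜ}),
      c ^ k * Equiv.Perm.ofSubtype h ∈
        Subgroup.centralizer ({c} : Set (Equiv.Perm (Fin n))) := by
    intro k h
    rw [Subgroup.mem_centralizer_singleton_iff]
    have hd : Disjoint (Equiv.Perm.ofSubtype h) c := by
      rw [Equiv.Perm.disjoint_iff_eq_or_eq]
      intro z
      by_cases hz : z ∈ c.supportᶜ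
      · right
        simpa using (Finset.mem_compl.mp hz)
      · left
        exact Equiv.Perm.ofSubtype_apply_of_not_mem h hz
    have h1 : Commute (c ^ k) c := Commute.pow_left rfl k
    have h2 : Commute (Equiv.Perm.ofSubtype h) c := hd.commute
    exact (h1.mul_left h2)
  set f : ZMod r × Equiv.Perm {y // y ∈ c.supportᶜ} →
      Subgroup.centralizer ({c} : Set (Equiv.Perm (Fin n))) :=
    fun p => ⟨c ^ (p.1.val) * Equiv.Perm.ofSubtype p.2, hmem _ _⟩ with hf
  have hofs : ∀ (h : Equiv.Perm {y // y ∈ c.supportᶜ}) (z : Fin n), z ∈ c.support →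
      Equiv.Perm.ofSubtype h z = z := by
    intro h z hz
    exact Equiv.Perm.ofSubtype_apply_of_not_mem h (by simpa using hz)
  have hinj : Function.Injective f := by
    rintro ⟨a, h⟩ ⟨b, h'⟩ heq
    simp only [hf, Subtype.mk.injEq] at heq
    have hpow : c ^ a.val = c ^ b.val := by
      apply Equiv.ext; intro z
      by_cases hz : z ∈ c.support
      · have h1 := congrArg (· z) heq
        simpa [Equiv.Perm.mul_apply, hofs h z hz, hofs h' z hz] using h1
      · have h1 : z ∉ (c ^ a.val).support :=
          fun hmem => hz (Equiv.Perm.support_pow_le c _ hmem)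
        have h2 : z ∉ (c ^ b.val).support :=
          fun hmem => hz (Equiv.Perm.support_pow_le c _ hmem)
        rw [Equiv.Perm.notMem_support.mp h1, Equiv.Perm.notMem_support.mp h2]
    have hab : a = b := by
      have := pow_eq_pow_iff_modEq.mp hpow
      rw [horder] at this
      have := (Nat.ModEq.eq_of_lt_of_lt this (ZMod.val_lt a) (ZMod.val_lt b))
      exact ZMod.val_injective r this
    subst hab
    rw [hpow] at heq
    have := mul_left_cancel heq
    have hh : h = h' := by
      ext y
      have h1 := congrArg (· (y : Fin n)) this
      have h2 : ((h y : {y // y ∈ c.supportᶜ}) : Fin n) = (h' y : Fin n) := by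
        simpa [Equiv.Perm.ofSubtype_apply_coe] using h1
      exact congrArg Fin.val h2
    rw [hh]
  have hsurj : Function.Surjective f := by
    rintro ⟨g, hg⟩
    have hcomm : Commute g c := Subgroup.mem_centralizer_singleton_iff.mp hg
    obtain ⟨hc', hz⟩ := hc.commute_iff.mp hcomm
    obtain ⟨m, hm⟩ := mem_powers_iff_mem_zpowers.mpr hz
    set u : Equiv.Perm (Fin n) := Equiv.Perm.ofSubtype (g.subtypePerm hc') with hu
    have hmu : c ^ m = u := hm
    -- u agrees with g on the support
    have hag : ∀ a ∈ c.support, u a = g a := by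
      intro a ha
      rw [hu, Equiv.Perm.ofSubtype_apply_of_mem _ ha]
      rfl
    have hfix : ∀ a ∈ c.support, (u⁻¹ * g) a = a := by
      intro a ha
      have : u⁻¹ (u a) = a := u.symm_apply_apply a
      simpa [Equiv.Perm.mul_apply, hag a ha] using this
    have hinv : ∀ y : Fin n, y ∈ c.supportᶜ ↔ (u⁻¹ * g) y ∈ c.supportᶜ := by
      intro y
      by_cases hy : y ∈ c.support
      · simp only [Finset.mem_compl, hy, not_true_eq_false, false_iff, not_not]
        rw [hfix y hy]; simpa using hy
      · have hgy : g y ∉ c.support := fun h => hy ((hc' y).mp h)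
        have huy : (u⁻¹ * g) y = g y := by
          have : u (g y) = g y := by
            rw [hu, Equiv.Perm.ofSubtype_apply_of_not_mem _ (by simpa using hgy)]
          have h2 : u⁻¹ (g y) = g y := by
            conv_lhs => rw [← this]
            exact u.symm_apply_apply _
          simpa [Equiv.Perm.mul_apply] using h2
        simp [huy, hy, hgy]
    refine ⟨⟨(m : ZMod r), Equiv.Perm.subtypePerm (u⁻¹ * g) (fun y => (hinv y).symm)⟩, ?_⟩
    have hofsub : Equiv.Perm.ofSubtype (Equiv.Perm.subtypePerm (u⁻¹ * g) (fun y => (hinv y).symm)) = u⁻¹ * g := by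
      ext z
      by_cases hz : z ∈ c.supportᶜ
      · rw [Equiv.Perm.ofSubtype_apply_of_mem _ hz]; rfl
      · rw [Equiv.Perm.ofSubtype_apply_of_not_mem _ hz, hfix z (by simpa using hz)]
    have hval : c ^ ((m : ZMod r)).val = c ^ m := by
      rw [ZMod.val_natCast, ← horder, pow_mod_orderOf]
    simp only [hf, Subtype.mk.injEq]
    rw [hofsub, hval, hmu, mul_inv_cancel_left]
  have hcard := Nat.card_congr (Equiv.ofBijective f ⟨hinj, hsurj⟩)
  rw [← hcard, Nat.card_prod, Nat.card_zmod, Nat.card_eq_fintype_card,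
    Fintype.card_perm, Fintype.card_coe, Finset.card_compl, hsupp, Fintype.card_fin]

/-- Centralizer of an `r`-cycle in `A_n`: if `r` is an odd prime, `n ≥ r + 2`, and
`x ∈ A_n` is an `r`-cycle, then `2 · |C_{A_n}(x)| = r · (n - r)!`. -/
theorem alternating_cycle_centralizer_card {r n : ℕ} (hr : r.Prime) (hodd : Odd r)
    (hn : r + 2 ≤ n) (x : alternatingGroup (Fin n))
    (hcyc : (x : Equiv.Perm (Fin n)).IsCycle)
    (hsupp : (x : Equiv.Perm (Fin n)).support.card = r) :
    2 * Nat.card (Subgroup.centralizer ({x} : Set (alternatingGroup (Fin n)))) =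
      r * Nat.factorial (n - r) := by
  classical
  set c := (x : Equiv.Perm (Fin n)) with hcdef
  have hCS : Nat.card (Subgroup.centralizer ({c} : Set (Equiv.Perm (Fin n)))) =
      r * (n - r).factorial := aux_card_centralizer_cycle hr.pos hcyc hsupp
  set CS := Subgroup.centralizer ({c} : Set (Equiv.Perm (Fin n))) with hCSdef
  set ψ : CS →* ℤˣ := Equiv.Perm.sign.comp CS.subtype with hψ
  have hsurj : Function.Surjective ψ := by
    intro u
    rcases Int.units_eq_one_or u with rfl | rfl
    · exact ⟨1, by simp [hψ]⟩
    · have hcompl : 1 < c.supportᶜ.card := by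
        rw [Finset.card_compl, Fintype.card_fin, hsupp]; omega
      obtain ⟨a, ha, b, hb, hab⟩ := Finset.one_lt_card.mp hcompl
      have hca : c a = a := by simpa using Finset.mem_compl.mp ha
      have hcb : c b = b := by simpa using Finset.mem_compl.mp hb
      have hdisj : Disjoint (Equiv.swap a b) c := by
        rw [Equiv.Perm.disjoint_iff_eq_or_eq]
        intro z
        by_cases hz : z = a ∨ z = b
        · right; rcases hz with rfl | rfl <;> assumption
        · push_neg at hz
          left; exact Equiv.swap_apply_of_ne_of_ne hz.1 hz.2
      refine ⟨⟨Equiv.swap a b, ?_⟩, ?_⟩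
      · rw [Subgroup.mem_centralizer_singleton_iff]; exact hdisj.commute
      · simp [hψ, Equiv.Perm.sign_swap hab]
  have hq : Nat.card (CS ⧸ ψ.ker) = 2 := by
    rw [Nat.card_congr (QuotientGroup.quotientKerEquivOfSurjective ψ hsurj).toEquiv,
      Nat.card_eq_fintype_card, Fintype.card_units_int]
  have hkerCA : Nat.card ψ.ker =
      Nat.card (Subgroup.centralizer ({x} : Set (alternatingGroup (Fin n)))) := by
    apply Nat.card_congr
    refine ⟨fun g => ⟨⟨g.1.1, ?_⟩, ?_⟩, fun g => ⟨⟨g.1.1, ?_⟩, ?_⟩,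
      fun g => Subtype.ext (Subtype.ext rfl), fun g => Subtype.ext (Subtype.ext rfl)⟩
    · exact Equiv.Perm.mem_alternatingGroup.mpr (by simpa [hψ] using MonoidHom.mem_ker.mp g.2)
    · rw [Subgroup.mem_centralizer_singleton_iff]
      exact Subtype.ext (Subgroup.mem_centralizer_singleton_iff.mp g.1.2)
    · rw [Subgroup.mem_centralizer_singleton_iff]
      exact congrArg Subtype.val (Subgroup.mem_centralizer_singleton_iff.mp g.2)
    · have := Equiv.Perm.mem_alternatingGroup.mp g.1.2
      simpa [hψ, MonoidHom.mem_ker] using this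
  calc 2 * Nat.card (Subgroup.centralizer ({x} : Set (alternatingGroup (Fin n))))
      = Nat.card (CS ⧸ ψ.ker) * Nat.card ψ.ker := by rw [hq, hkerCA]
    _ = Nat.card CS := (Subgroup.card_eq_card_quotient_mul_card_subgroup ψ.ker).symm
    _ = r * (n - r).factorial := hCS
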